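/- Let X = Y'21Y'' be a word in {0,1,2} beginning with 1 (the 2 and 1 shown are at adjacent positions). Then weight(X) = weight(Y'1Y''), where weight denotes the number of toric rhombic alternative tableaux fillings of the corresponding type. In terms of X-consistent lists: the X-consistent lists for Y'21Y'' are in bijection with the X-consistent lists for Y'1Y''. -/
import Mathlib


/-- `bmax X i` is the position of the nearest 1 strictly before position `i`
(positions are `1, …, n`; well-defined when `X 1 = 1` and `i > 1`). -/
def bmax (X : ℕ → Fin 3) (i : ℕ) : ℕ :=
  ((Finset.Ioo 0 i).filter (fun j => X j = 1)).sup id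

/-- An `X`-consistent list: a tuple of nonnegative integers `w`, supported on the positions
of the 0's of `X`, such that for every position `i` of a 0,
`Σ_{j : b_i < x_j ≤ x_i} w_{x_j} + 1 ≤ i − b_i`, where `b_i = bmax X i`. -/
def XConsistent (n : ℕ) (X : ℕ → Fin 3) (w : ℕ → ℕ) : Prop :=
  (∀ i ∈ Finset.Icc 1 n, X i = 0 →
    (((Finset.Icc 1 n).filter (fun j => X j = 0 ∧ bmax X i < j ∧ j ≤ i)).sum w) + 1
      ≤ i - bmax X i) ∧
  ∀ j, ¬(j ∈ Finset.Icc 1 n ∧ X j = 0) → w j = 0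

lemma le_bmax (X : ℕ → Fin 3) {i j : ℕ} (h0 : 0 < j) (hji : j < i) (hX : X j = 1) :
    j ≤ bmax X i := by
  apply Finset.le_sup (f := id) (b := j)
  simp only [Finset.mem_filter, Finset.mem_Ioo]
  exact ⟨⟨h0, hji⟩, hX⟩

lemma bmax_lt (X : ℕ → Fin 3) {i : ℕ} (hi : 0 < i) : bmax X i < i := by
  apply (Finset.sup_lt_iff (by simpa using hi)).mpr
  intro b hb
  simp only [Finset.mem_filter, Finset.mem_Ioo] at hb
  simpa using hb.1.2

lemma bmax_one (X : ℕ → Fin 3) {i j : ℕ} (h0 : 0 < j) (hji : j < i) (hX : X j = 1) :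
    X (bmax X i) = 1 := by
  have hne : ((Finset.Ioo 0 i).filter (fun j => X j = 1)).Nonempty :=
    ⟨j, by simp [Finset.mem_filter, Finset.mem_Ioo, h0, hji, hX]⟩
  obtain ⟨b, hb, he⟩ := Finset.exists_mem_eq_sup _ hne id
  simp only [Finset.mem_filter] at hb
  rw [bmax, he]
  exact hb.2

lemma bmax_low (m : ℕ) (X : ℕ → Fin 3) {i : ℕ} (hi : i ≤ m) :
    bmax (fun j => if j < m then X j else X (j + 1)) i = bmax X i := by
  unfold bmax
  congr 1
  apply Finset.filter_congr
  intro j hj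
  simp only [Finset.mem_Ioo] at hj
  show (if j < m then X j else X (j + 1)) = 1 ↔ X j = 1
  rw [if_pos (by omega)]

lemma bmax_high (m : ℕ) (X : ℕ → Fin 3) (h2 : X m = 2) (h1 : X (m + 1) = 1)
    (hm0 : 0 < m) {i : ℕ} (hi : m + 1 ≤ i) :
    m + 1 ≤ bmax X (i + 1) ∧
      bmax (fun j => if j < m then X j else X (j + 1)) i + 1 = bmax X (i + 1) := by
  set X' := fun j => if j < m then X j else X (j + 1) with hX'
  have hb : m + 1 ≤ bmax X (i + 1) := le_bmax X (by omega) (by omega) h1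
  have hbX : X (bmax X (i + 1)) = 1 := bmax_one X (j := m + 1) (by omega) (by omega) h1
  have hblt : bmax X (i + 1) < i + 1 := bmax_lt X (by omega)
  have hX'm : X' m = 1 := by rw [hX']; simp only [lt_irrefl, if_neg (lt_irrefl m)]; exact h1
  have h1' : bmax X (i + 1) - 1 ≤ bmax X' i := by
    apply le_bmax X' (by omega) (by omega)
    show (if bmax X (i+1) - 1 < m then X (bmax X (i+1) - 1) else X (bmax X (i+1) - 1 + 1)) = 1
    rw [if_neg (by omega)]
    have he : bmax X (i + 1) - 1 + 1 = bmax X (i + 1) := by omega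
    rw [he]; exact hbX
  have hm' : m ≤ bmax X' i := le_bmax X' (by omega) (by omega) hX'm
  have hlt : bmax X' i < i := bmax_lt X' (by omega)
  have hX'b : X' (bmax X' i) = 1 := bmax_one X' (j := m) (by omega) (by omega) hX'm
  have h2' : bmax X' i + 1 ≤ bmax X (i + 1) := by
    apply le_bmax X (by omega) (by omega)
    have hX'b2 : (if bmax X' i < m then X (bmax X' i) else X (bmax X' i + 1)) = 1 := hX'b
    rwa [if_neg (by omega)] at hX'b2
  refine ⟨hb, ?_⟩
  show bmax X' i + 1 = bmax X (i + 1)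
  omega

lemma forward (n m : ℕ) (X : ℕ → Fin 3)
    (hm : 2 ≤ m) (hmn : m + 1 ≤ n) (h2 : X m = 2) (h1 : X (m + 1) = 1)
    (w : ℕ → ℕ) (hw : XConsistent n X w) :
    XConsistent (n - 1) (fun j => if j < m then X j else X (j + 1))
      (fun j => if j < m then w j else w (j + 1)) := by
  obtain ⟨hc, hs⟩ := hw
  constructor
  · intro i hi hXi
    simp only [Finset.mem_Icc] at hi
    simp only at hXi
    by_cases him : i < m
    · -- low case
      have hXi' : X i = 0 := by rwa [if_pos him] at hXi
      have hci := hc i (by simp only [Finset.mem_Icc]; omega) hXi'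
      have hb := bmax_low m X (i := i) (le_of_lt him)
      rw [hb]
      have hset : ((Finset.Icc 1 (n - 1)).filter
            (fun j => (if j < m then X j else X (j + 1)) = 0 ∧ bmax X i < j ∧ j ≤ i))
          = ((Finset.Icc 1 n).filter (fun j => X j = 0 ∧ bmax X i < j ∧ j ≤ i)) := by
        ext j
        simp only [Finset.mem_filter, Finset.mem_Icc]
        constructor
        · rintro ⟨⟨hj1, hj2⟩, hj3, hj4, hj5⟩
          rw [if_pos (by omega)] at hj3
          exact ⟨⟨hj1, by omega⟩, hj3, hj4, hj5⟩
        · rintro ⟨⟨hj1, hj2⟩, hj3, hj4, hj5⟩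
          refine ⟨⟨hj1, by omega⟩, ?_, hj4, hj5⟩
          rw [if_pos (by omega)]; exact hj3
      rw [hset]
      calc ((Finset.Icc 1 n).filter (fun j => X j = 0 ∧ bmax X i < j ∧ j ≤ i)).sum
              (fun j => if j < m then w j else w (j + 1)) + 1
          = ((Finset.Icc 1 n).filter (fun j => X j = 0 ∧ bmax X i < j ∧ j ≤ i)).sum w + 1 := by
            congr 1
            apply Finset.sum_congr rfl
            intro j hj
            simp only [Finset.mem_filter, Finset.mem_Icc] at hj
            rw [if_pos (by omega)]
        _ ≤ i - bmax X i := hci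
    · -- high case: i ≥ m, and i ≠ m
      have him' : m + 1 ≤ i := by
        rcases Nat.eq_or_lt_of_le (le_of_not_gt him) with he | hlt
        · exfalso
          rw [if_neg (by omega), ← he, h1] at hXi
          exact absurd hXi (by decide)
        · omega
      have hXi1 : X (i + 1) = 0 := by rwa [if_neg (by omega)] at hXi
      obtain ⟨hb1, hb2⟩ := bmax_high m X h2 h1 (by omega) him'
      have hci := hc (i + 1) (by simp only [Finset.mem_Icc]; omega) hXi1
      have hblt : bmax (fun j => if j < m then X j else X (j + 1)) i < i :=
        bmax_lt _ (by omega)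
      have hsum : ((Finset.Icc 1 (n - 1)).filter
            (fun j => (if j < m then X j else X (j + 1)) = 0 ∧
              bmax (fun j => if j < m then X j else X (j + 1)) i < j ∧ j ≤ i)).sum
            (fun j => if j < m then w j else w (j + 1))
          = ((Finset.Icc 1 n).filter
            (fun k => X k = 0 ∧ bmax X (i + 1) < k ∧ k ≤ i + 1)).sum w := by
        apply Finset.sum_nbij' (i := fun j => j + 1) (j := fun k => k - 1)
        · intro j hj
          simp only [Finset.mem_filter, Finset.mem_Icc] at hj ⊢
          obtain ⟨⟨hj1, hj2⟩, hj3, hj4, hj5⟩ := hj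
          rw [if_neg (by omega)] at hj3
          exact ⟨⟨by omega, by omega⟩, hj3, by omega, by omega⟩
        · intro k hk
          simp only [Finset.mem_filter, Finset.mem_Icc] at hk ⊢
          obtain ⟨⟨hk1, hk2⟩, hk3, hk4, hk5⟩ := hk
          have hkm : m + 2 ≤ k := by omega
          refine ⟨⟨by omega, by omega⟩, ?_, by omega, by omega⟩
          rw [if_neg (by omega)]
          have : k - 1 + 1 = k := by omega
          rw [this]; exact hk3
        · intro j hj; omega
        · intro k hk
          simp only [Finset.mem_filter, Finset.mem_Icc] at hk
          omega
        · intro j hj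
          simp only [Finset.mem_filter, Finset.mem_Icc] at hj
          rw [if_neg (by omega)]
      rw [hsum]
      omega
  · -- support
    intro j hj
    simp only [Finset.mem_Icc] at hj
    show (if j < m then w j else w (j + 1)) = 0
    by_cases hjm : j < m
    · rw [if_pos hjm]
      apply hs
      rintro ⟨hj1, hj2⟩
      simp only [Finset.mem_Icc] at hj1
      exact hj ⟨by omega, by rw [if_pos hjm]; exact hj2⟩
    · rw [if_neg hjm]
      apply hs
      rintro ⟨hj1, hj2⟩
      simp only [Finset.mem_Icc] at hj1
      exact hj ⟨by omega, by rw [if_neg hjm]; exact hj2⟩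

lemma backward (n m : ℕ) (X : ℕ → Fin 3)
    (hm : 2 ≤ m) (hmn : m + 1 ≤ n) (h2 : X m = 2) (h1 : X (m + 1) = 1)
    (w : ℕ → ℕ)
    (hw : XConsistent (n - 1) (fun j => if j < m then X j else X (j + 1)) w) :
    XConsistent n X (fun j => if j < m then w j else if j = m then 0 else w (j - 1)) := by
  obtain ⟨hc, hs⟩ := hw
  constructor
  · intro i hi hXi
    simp only [Finset.mem_Icc] at hi
    have him : i ≠ m := by rintro rfl; rw [h2] at hXi; exact absurd hXi (by decide)
    have him1 : i ≠ m + 1 := by rintro rfl; rw [h1] at hXi; exact absurd hXi (by decide)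
    by_cases hilt : i < m
    · -- low case
      have hXi' : (if i < m then X i else X (i + 1)) = 0 := by rwa [if_pos hilt]
      have hci := hc i (by simp only [Finset.mem_Icc]; omega) hXi'
      rw [bmax_low m X (le_of_lt hilt)] at hci
      have hset : ((Finset.Icc 1 (n - 1)).filter
            (fun j => (if j < m then X j else X (j + 1)) = 0 ∧ bmax X i < j ∧ j ≤ i))
          = ((Finset.Icc 1 n).filter (fun j => X j = 0 ∧ bmax X i < j ∧ j ≤ i)) := by
        ext j
        simp only [Finset.mem_filter, Finset.mem_Icc]
        constructor
        · rintro ⟨⟨hj1, hj2⟩, hj3, hj4, hj5⟩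
          rw [if_pos (by omega)] at hj3
          exact ⟨⟨hj1, by omega⟩, hj3, hj4, hj5⟩
        · rintro ⟨⟨hj1, hj2⟩, hj3, hj4, hj5⟩
          refine ⟨⟨hj1, by omega⟩, ?_, hj4, hj5⟩
          rw [if_pos (by omega)]; exact hj3
      rw [hset] at hci
      calc ((Finset.Icc 1 n).filter (fun j => X j = 0 ∧ bmax X i < j ∧ j ≤ i)).sum
              (fun j => if j < m then w j else if j = m then 0 else w (j - 1)) + 1
          = ((Finset.Icc 1 n).filter (fun j => X j = 0 ∧ bmax X i < j ∧ j ≤ i)).sum w + 1 := by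
            congr 1
            apply Finset.sum_congr rfl
            intro j hj
            simp only [Finset.mem_filter, Finset.mem_Icc] at hj
            rw [if_pos (by omega)]
        _ ≤ i - bmax X i := hci
    · -- high case: i ≥ m + 2
      have him2 : m + 2 ≤ i := by omega
      have hXi' : (if i - 1 < m then X (i - 1) else X (i - 1 + 1)) = 0 := by
        rw [if_neg (by omega)]
        have : i - 1 + 1 = i := by omega
        rwa [this]
      have hci := hc (i - 1) (by simp only [Finset.mem_Icc]; omega) hXi'
      beta_reduce at hci
      obtain ⟨hb1, hb2⟩ := bmax_high m X h2 h1 (by omega) (i := i - 1) (by omega)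
      have hii : i - 1 + 1 = i := by omega
      rw [hii] at hb1 hb2
      have hblt : bmax (fun j => if j < m then X j else X (j + 1)) (i - 1) < i - 1 :=
        bmax_lt _ (by omega)
      have hsum : ((Finset.Icc 1 n).filter
            (fun k => X k = 0 ∧ bmax X i < k ∧ k ≤ i)).sum
            (fun j => if j < m then w j else if j = m then 0 else w (j - 1))
          = ((Finset.Icc 1 (n - 1)).filter
            (fun j => (if j < m then X j else X (j + 1)) = 0 ∧
              bmax (fun j => if j < m then X j else X (j + 1)) (i - 1) < j ∧ j ≤ i - 1)).sum w := by
        apply Finset.sum_nbij' (i := fun k => k - 1) (j := fun j => j + 1)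
        · intro k hk
          simp only [Finset.mem_filter, Finset.mem_Icc] at hk ⊢
          obtain ⟨⟨hk1, hk2⟩, hk3, hk4, hk5⟩ := hk
          have hkm : m + 2 ≤ k := by omega
          refine ⟨⟨by omega, by omega⟩, ?_, by omega, by omega⟩
          rw [if_neg (by omega)]
          have : k - 1 + 1 = k := by omega
          rw [this]; exact hk3
        · intro j hj
          simp only [Finset.mem_filter, Finset.mem_Icc] at hj ⊢
          obtain ⟨⟨hj1, hj2⟩, hj3, hj4, hj5⟩ := hj
          rw [if_neg (by omega)] at hj3
          exact ⟨⟨by omega, by omega⟩, hj3, by omega, by omega⟩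
        · intro k hk
          simp only [Finset.mem_filter, Finset.mem_Icc] at hk
          omega
        · intro j hj; omega
        · intro k hk
          simp only [Finset.mem_filter, Finset.mem_Icc] at hk
          rw [if_neg (by omega), if_neg (by omega)]
      rw [hsum]
      omega
  · -- support
    intro j hj
    simp only [Finset.mem_Icc] at hj
    show (if j < m then w j else if j = m then 0 else w (j - 1)) = 0
    by_cases hjm : j < m
    · rw [if_pos hjm]
      apply hs
      rintro ⟨hj1, hj2⟩
      simp only [Finset.mem_Icc] at hj1
      have hj2' : (if j < m then X j else X (j + 1)) = 0 := hj2
      rw [if_pos hjm] at hj2'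
      exact hj ⟨by omega, hj2'⟩
    · rw [if_neg hjm]
      by_cases hje : j = m
      · rw [if_pos hje]
      · rw [if_neg hje]
        apply hs
        rintro ⟨hj1, hj2⟩
        simp only [Finset.mem_Icc] at hj1
        have hj2' : (if j - 1 < m then X (j - 1) else X (j - 1 + 1)) = 0 := hj2
        rw [if_neg (by omega)] at hj2'
        have hje2 : j - 1 + 1 = j := by omega
        rw [hje2] at hj2'
        exact hj ⟨by omega, hj2'⟩

/-- If `X = Y'21Y''` begins with a 1 and has an adjacent pair `21` at positions
`m, m+1`, then `weight(Y'21Y'') = weight(Y'1Y'')`: the `X`-consistent lists for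
`Y'21Y''` are in bijection with those for `Y'1Y''` (obtained by deleting the 2 at
position `m`), so the TRAT counts agree. -/
theorem weight_delete_two_before_one (n m : ℕ) (X : ℕ → Fin 3) (hX1 : X 1 = 1)
    (hm : 2 ≤ m) (hmn : m + 1 ≤ n) (h2 : X m = 2) (h1 : X (m + 1) = 1) :
    Nonempty ({w : ℕ → ℕ // XConsistent n X w} ≃
      {w : ℕ → ℕ // XConsistent (n - 1) (fun j => if j < m then X j else X (j + 1)) w}) := by
  refine ⟨⟨fun w => ⟨fun j => if j < m then w.1 j else w.1 (j + 1),
      forward n m X hm hmn h2 h1 w.1 w.2⟩,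
    fun w => ⟨fun j => if j < m then w.1 j else if j = m then 0 else w.1 (j - 1),
      backward n m X hm hmn h2 h1 w.1 w.2⟩, ?_, ?_⟩⟩
  · intro w
    apply Subtype.ext
    funext j
    show (if j < m then (if j < m then w.1 j else w.1 (j + 1))
        else if j = m then 0
        else (if j - 1 < m then w.1 (j - 1) else w.1 (j - 1 + 1))) = w.1 j
    by_cases hjm : j < m
    · rw [if_pos hjm, if_pos hjm]
    · rw [if_neg hjm]
      by_cases hje : j = m
      · rw [if_pos hje]
        subst hje
        exact (w.2.2 j (by rintro ⟨_, h⟩; rw [h2] at h; exact absurd h (by decide))).symm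
      · rw [if_neg hje, if_neg (by omega)]
        have he : j - 1 + 1 = j := by omega
        rw [he]
  · intro w
    apply Subtype.ext
    funext j
    show (if j < m then (if j < m then w.1 j else if j = m then 0 else w.1 (j - 1))
        else (if j + 1 < m then w.1 (j + 1)
              else if j + 1 = m then 0 else w.1 (j + 1 - 1))) = w.1 j
    by_cases hjm : j < m
    · rw [if_pos hjm, if_pos hjm]
    · rw [if_neg hjm, if_neg (by omega), if_neg (by omega)]
      have he : j + 1 - 1 = j := by omega
      rw [he]
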